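/- Let n be a positive integer, b > 0 a real number, y ∈ [0,1]^n, and w ∈ [0,b]^n. Then b − b·Π_{i=1}^n (1 − y_i·w_i/b) ≥ (1 − (1 − 1/n)^n) · min{ b , Σ_{i=1}^n y_i·w_i }. -/

import Mathlib

open Finset

lemma amgm_aux (n : ℕ) (hn : 0 < n) (x : Fin n → ℝ) (hx : ∀ i, 0 ≤ x i) :
    ∏ i, x i ≤ ((∑ i, x i) / n) ^ n := by
  have hn' : (0:ℝ) < n := by exact_mod_cast hn
  have hw : ∑ _i : Fin n, ((n:ℝ)⁻¹) = 1 := by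
    simp [Finset.sum_const, Finset.card_univ]
    field_simp
  have h := Real.geom_mean_le_arith_mean_weighted Finset.univ (fun _ => (n:ℝ)⁻¹) x
    (fun i _ => by positivity) hw (fun i _ => hx i)
  have hrw : ∑ i, (n:ℝ)⁻¹ * x i = (∑ i, x i) / n := by
    rw [← Finset.mul_sum]; ring
  rw [hrw] at h
  have hprod : (0:ℝ) ≤ ∏ i, x i ^ ((n:ℝ)⁻¹) :=
    Finset.prod_nonneg fun i _ => Real.rpow_nonneg (hx i) _
  have h2 : (∏ i, x i ^ ((n:ℝ)⁻¹)) ^ (n:ℕ) ≤ ((∑ i, x i) / n) ^ n :=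
    pow_le_pow_left₀ hprod h n
  calc ∏ i, x i = (∏ i, x i ^ ((n:ℝ)⁻¹)) ^ (n:ℕ) := by
        rw [← Finset.prod_pow]
        refine Finset.prod_congr rfl fun i _ => ?_
        rw [← Real.rpow_natCast (x i ^ ((n:ℝ)⁻¹)) n, ← Real.rpow_mul (hx i),
          inv_mul_cancel₀ (ne_of_gt hn'), Real.rpow_one]
    _ ≤ _ := h2

/-- Unweighted Goemans–Williamson inequality. -/
lemma gw_core (n : ℕ) (hn : 0 < n) (z : Fin n → ℝ)
    (hz : ∀ i, z i ∈ Set.Icc (0 : ℝ) 1) :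
    (1 - (1 - 1 / (n : ℝ)) ^ n) * min 1 (∑ i, z i) ≤ 1 - ∏ i, (1 - z i) := by
  have hn' : (0:ℝ) < n := by exact_mod_cast hn
  set S := ∑ i, z i with hS
  have hS0 : 0 ≤ S := Finset.sum_nonneg fun i _ => (hz i).1
  have hSn : S ≤ n := by
    calc S ≤ ∑ _i : Fin n, (1:ℝ) := Finset.sum_le_sum fun i _ => (hz i).2
    _ = n := by simp
  have hAM : ∏ i, (1 - z i) ≤ (1 - S / n) ^ n := by
    have h := amgm_aux n hn (fun i => 1 - z i)
      (fun i => by have := (hz i).2; linarith)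
    have : (∑ i, (1 - z i)) / (n:ℝ) = 1 - S / n := by
      rw [Finset.sum_sub_distrib]
      simp
      field_simp
      rw [hS]
    rwa [this] at h
  rcases le_total 1 S with h1 | h1
  · -- min = 1; need (1 - S/n)^n ≤ (1 - 1/n)^n
    rw [min_eq_left h1]
    have hb1 : (0:ℝ) ≤ 1 - S / n := by
      have : S / n ≤ 1 := by rw [div_le_one hn']; exact hSn
      linarith
    have hb2 : 1 - S / n ≤ 1 - 1 / n := by
      have : 1 / (n:ℝ) ≤ S / n := by gcongr
      linarith
    have := pow_le_pow_left₀ hb1 hb2 n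
    nlinarith [hAM]
  · -- min = S; use convexity of x ↦ x^n
    rw [min_eq_right h1]
    have h1n : 1 / (n:ℝ) ≤ 1 := by
      rw [div_le_one hn']; exact_mod_cast hn
    have hconv := (convexOn_pow n).2 (Set.mem_Ici.mpr (by norm_num : (0:ℝ) ≤ 1))
      (Set.mem_Ici.mpr (by linarith : (0:ℝ) ≤ 1 - 1/(n:ℝ)))
      (by linarith : (0:ℝ) ≤ 1 - S) hS0 (by ring)
    simp only [smul_eq_mul, mul_one, one_pow] at hconv
    rw [show 1 - S + S * (1 - 1/(n:ℝ)) = 1 - S / n by field_simp; ring] at hconv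
    nlinarith [hAM, hconv]

/-- Weighted Goemans–Williamson-type inequality (Appendix E of the paper). -/
theorem multilinear_ge_threshold
    (n : ℕ) (hn : 0 < n) (b : ℝ) (hb : 0 < b)
    (y w : Fin n → ℝ)
    (hy : ∀ i, y i ∈ Set.Icc (0 : ℝ) 1)
    (hw : ∀ i, w i ∈ Set.Icc (0 : ℝ) b) :
    (1 - (1 - 1 / (n : ℝ)) ^ n) * min b (∑ i, y i * w i)
      ≤ b - b * ∏ i, (1 - y i * w i / b) := by
  have hz : ∀ i, y i * w i / b ∈ Set.Icc (0:ℝ) 1 := by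
    intro i
    obtain ⟨hy0, hy1⟩ := hy i
    obtain ⟨hw0, hwb⟩ := hw i
    constructor
    · positivity
    · rw [div_le_one hb]
      nlinarith
  have key := gw_core n hn (fun i => y i * w i / b) hz
  have hkey := mul_le_mul_of_nonneg_left key hb.le
  have hsum : ∑ i, y i * w i / b = (∑ i, y i * w i) / b := by
    rw [← Finset.sum_div]
  rw [hsum] at hkey
  have hmin : b * min 1 ((∑ i, y i * w i) / b) = min b (∑ i, y i * w i) := by
    rw [mul_min_of_nonneg _ _ hb.le, mul_one, mul_div_cancel₀ _ (ne_of_gt hb)]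
  rw [mul_left_comm, hmin, mul_sub, mul_one] at hkey
  exact hkey
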